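/- arXiv:1707.08284 — 3 statements merged into one kernel-verified Lean document; each statement's English description precedes it below -/
import Mathlib

section
/- Let θ := β/μ and κ := (γθ−ζ)/(γθ), and assume R₀ := βγ/(μζ) > 1 with all parameters positive. Then κ ∈ (0,1], and every point (x₁,x₂,y,z) = (κx, κ(1−x), θκx, θκ(1−x)) with x ∈ [0,1] is a stationary point of the system x₁' = γ(1−x₁−x₂)y − ζx₁, x₂' = γ(1−x₁−x₂)z − ζx₂, y' = βx₁ − μy, z' = βx₂ − μz. -/
/-- with θ = β/μ, κ = (γθ−ζ)/(γθ) and R₀ = βγ/(μζ) > 1,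
κ ∈ (0,1] and the points (κx, κ(1−x), θκx, θκ(1−x)), x ∈ [0,1], are stationary. -/
theorem stmt_1 (β γ ζ μ θ κ : ℝ)
    (hβ : 0 < β) (hγ : 0 < γ) (hζ : 0 < ζ) (hμ : 0 < μ)
    (hθdef : θ = β / μ)
    (hκdef : κ = (γ * θ - ζ) / (γ * θ))
    (hR : β * γ / (μ * ζ) > 1) :
    (0 < κ ∧ κ ≤ 1) ∧
    ∀ x ∈ Set.Icc (0:ℝ) 1,
      γ * (1 - κ * x - κ * (1 - x)) * (θ * κ * x) - ζ * (κ * x) = 0 ∧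
      γ * (1 - κ * x - κ * (1 - x)) * (θ * κ * (1 - x)) - ζ * (κ * (1 - x)) = 0 ∧
      β * (κ * x) - μ * (θ * κ * x) = 0 ∧
      β * (κ * (1 - x)) - μ * (θ * κ * (1 - x)) = 0 := by
  have hθ : 0 < θ := hθdef ▸ div_pos hβ hμ
  have hγθ : 0 < γ * θ := mul_pos hγ hθ
  have hζγθ : ζ < γ * θ := by
    rw [hθdef]
    rw [gt_iff_lt, lt_div_iff₀ (mul_pos hμ hζ), one_mul] at hR
    rw [show γ * (β / μ) = β * γ / μ by ring, lt_div_iff₀ hμ]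
    nlinarith
  have hκpos : 0 < κ := by
    rw [hκdef]; exact div_pos (by linarith) hγθ
  have hκle : κ ≤ 1 := by
    rw [hκdef, div_le_one hγθ]; linarith
  have key : γ * θ * (1 - κ) = ζ := by
    rw [hκdef]; field_simp; ring
  refine ⟨⟨hκpos, hκle⟩, fun x _ => ?_⟩
  have h1 : 1 - κ * x - κ * (1 - x) = 1 - κ := by ring
  have hμθ : μ * θ = β := by rw [hθdef]; field_simp
  refine ⟨?_, ?_, ?_, ?_⟩
  · rw [show 1 - κ * x - κ * (1 - x) = 1 - κ by ring]
    linear_combination (κ * x) * key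
  · rw [show 1 - κ * x - κ * (1 - x) = 1 - κ by ring]
    linear_combination (κ * (1 - x)) * key
  · linear_combination (-(κ * x)) * hμθ
  · linear_combination (-(κ * (1 - x))) * hμθ
end

section
/- Let θ := (β−ζ)/μ > 0 and consider the system x' = −ζxz/(y+z) + ζ(1−x)y/(y+z), y' = βx − μy − ζy/(y+z), z' = β(1−x) − μz − ζz/(y+z). At any stationary point (x, θx, θ(1−x)) with x ∈ (0,1), the Jacobian has the vector (0, x, 1−x) as an eigenvector with eigenvalue −μ and the vector (ζ, −β, β) as an eigenvector with eigenvalue −ζ − β/θ. -/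
/-- at the stationary point (x, θx, θ(1−x)), x ∈ (0,1), the Jacobian
of the vector field has eigenvector (0, x, 1−x) with eigenvalue −μ and
eigenvector (ζ, −β, β) with eigenvalue −ζ − β/θ. -/
theorem stmt_4 (β ζ μ θ : ℝ)
    (hβ : 0 < β) (hζ : 0 < ζ) (hμ : 0 < μ) (hβζ : ζ < β)
    (hθdef : θ = (β - ζ) / μ)
    (F : ℝ × ℝ × ℝ → ℝ × ℝ × ℝ)
    (hF : ∀ p : ℝ × ℝ × ℝ,
      F p = (-ζ * p.1 * p.2.2 / (p.2.1 + p.2.2) + ζ * (1 - p.1) * p.2.1 / (p.2.1 + p.2.2),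
             β * p.1 - μ * p.2.1 - ζ * p.2.1 / (p.2.1 + p.2.2),
             β * (1 - p.1) - μ * p.2.2 - ζ * p.2.2 / (p.2.1 + p.2.2))) :
    ∀ x ∈ Set.Ioo (0:ℝ) 1,
      fderiv ℝ F (x, θ * x, θ * (1 - x)) ((0:ℝ), x, 1 - x)
        = (-μ) • ((0:ℝ), x, 1 - x) ∧
      fderiv ℝ F (x, θ * x, θ * (1 - x)) (ζ, -β, β)
        = (-ζ - β / θ) • (ζ, -β, β) := by
  intro x hx
  have hθpos : 0 < θ := by
    rw [hθdef]; exact div_pos (sub_pos.mpr hβζ) hμ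
  have hθ : θ ≠ 0 := ne_of_gt hθpos
  have hμθ : μ * θ = β - ζ := by
    rw [hθdef]; field_simp
  set p0 : ℝ × ℝ × ℝ := (x, θ * x, θ * (1 - x)) with hp0
  have hsum : p0.2.1 + p0.2.2 = θ := by simp [hp0]; ring
  have hs0 : p0.2.1 + p0.2.2 ≠ 0 := by rw [hsum]; exact hθ
  have Hx : HasFDerivAt (fun p : ℝ × ℝ × ℝ => p.1)
      (ContinuousLinearMap.fst ℝ ℝ (ℝ × ℝ)) p0 := hasFDerivAt_fst
  have Hy : HasFDerivAt (fun p : ℝ × ℝ × ℝ => p.2.1) _ p0 :=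
    (hasFDerivAt_snd (𝕜 := ℝ) (p := p0)).fst
  have Hz : HasFDerivAt (fun p : ℝ × ℝ × ℝ => p.2.2) _ p0 :=
    (hasFDerivAt_snd (𝕜 := ℝ) (p := p0)).snd
  have Hs : HasFDerivAt (fun p : ℝ × ℝ × ℝ => p.2.1 + p.2.2) _ p0 := Hy.add Hz
  have Hinv : HasFDerivAt (fun p : ℝ × ℝ × ℝ => (p.2.1 + p.2.2)⁻¹) _ p0 :=
    (hasFDerivAt_inv hs0).comp p0 Hs
  have H1 : HasFDerivAt (fun p : ℝ × ℝ × ℝ =>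
      -ζ * p.1 * p.2.2 * (p.2.1 + p.2.2)⁻¹ + ζ * (1 - p.1) * p.2.1 * (p.2.1 + p.2.2)⁻¹)
      _ p0 :=
    (((Hx.const_mul (-ζ)).mul Hz).mul Hinv).add
      ((((Hx.const_sub 1).const_mul ζ).mul Hy).mul Hinv)
  have H2 : HasFDerivAt (fun p : ℝ × ℝ × ℝ =>
      β * p.1 - μ * p.2.1 - ζ * p.2.1 * (p.2.1 + p.2.2)⁻¹) _ p0 :=
    ((Hx.const_mul β).sub (Hy.const_mul μ)).sub ((Hy.const_mul ζ).mul Hinv)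
  have H3 : HasFDerivAt (fun p : ℝ × ℝ × ℝ =>
      β * (1 - p.1) - μ * p.2.2 - ζ * p.2.2 * (p.2.1 + p.2.2)⁻¹) _ p0 :=
    (((Hx.const_sub 1).const_mul β).sub (Hz.const_mul μ)).sub ((Hz.const_mul ζ).mul Hinv)
  have hβ' : β = μ * θ + ζ := by linarith [hμθ]
  have H := HasFDerivAt.prodMk H1 (HasFDerivAt.prodMk H2 H3)
  have HF : HasFDerivAt F _ p0 :=
    H.congr_of_eventuallyEq (Filter.Eventually.of_forall fun p => by
      rw [hF p]; simp only [div_eq_mul_inv])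
  rw [HF.fderiv]
  constructor
  · simp only [ContinuousLinearMap.prod_apply, ContinuousLinearMap.add_apply,
      ContinuousLinearMap.sub_apply, ContinuousLinearMap.neg_apply,
      ContinuousLinearMap.smul_apply, ContinuousLinearMap.comp_apply,
      ContinuousLinearMap.smulRight_apply, ContinuousLinearMap.one_apply,
      ContinuousLinearMap.coe_fst', ContinuousLinearMap.coe_snd',
      smul_eq_mul, Prod.smul_mk, hp0]
    refine Prod.ext ?_ (Prod.ext ?_ ?_) <;> simp <;>
      simp only [hβ', show θ * x + θ * (1 - x) = θ from by ring] <;>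
      field_simp <;> ring
  · simp only [ContinuousLinearMap.prod_apply, ContinuousLinearMap.add_apply,
      ContinuousLinearMap.sub_apply, ContinuousLinearMap.neg_apply,
      ContinuousLinearMap.smul_apply, ContinuousLinearMap.comp_apply,
      ContinuousLinearMap.smulRight_apply, ContinuousLinearMap.one_apply,
      ContinuousLinearMap.coe_fst', ContinuousLinearMap.coe_snd',
      smul_eq_mul, Prod.smul_mk, hp0]
    refine Prod.ext ?_ (Prod.ext ?_ ?_) <;> simp <;>
      simp only [hβ', show θ * x + θ * (1 - x) = θ from by ring] <;>
      field_simp <;> ring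
end

section
/- In the fixed-population fluctuating-seed-bank setting (θ = (β−ζ)/μ > 0), define h₂ = ((1−2x)ỹ)²ζ(1+1/θ) / (2(2μ+ζ(1+1/θ))(μ+ζ(1+1/θ))) − (1−2x)ỹz̃μ / ((2μ+ζ(1+1/θ))(μ+ζ(1+1/θ))) − z̃²/(2(μ+ζ(1+1/θ))) and g(x) = 4x(1−x)(β + ζθ(1+θ))/(μ + ζ(1+1/θ)). Then (L⁽⁰⁾)⁺h₂ + g(x) = (z̃ + (1−2x)ỹ)z̃. -/
open ContinuousLinearMap

lemma quad_hasFDerivAt (A B C : ℝ) (p : ℝ × ℝ) :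
    HasFDerivAt (fun q : ℝ × ℝ => A * (q.1 * q.1) + B * (q.1 * q.2) + C * (q.2 * q.2))
      ((2 * A * p.1 + B * p.2) • ContinuousLinearMap.fst ℝ ℝ ℝ
        + (B * p.1 + 2 * C * p.2) • ContinuousLinearMap.snd ℝ ℝ ℝ) p := by
  have hf : HasFDerivAt (Prod.fst : ℝ × ℝ → ℝ) (ContinuousLinearMap.fst ℝ ℝ ℝ) p :=
    hasFDerivAt_fst
  have hs : HasFDerivAt (Prod.snd : ℝ × ℝ → ℝ) (ContinuousLinearMap.snd ℝ ℝ ℝ) p :=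
    hasFDerivAt_snd
  have h := (((hf.mul hf).const_mul A).add
      ((hf.mul hs).const_mul B)).add
      (((hs.mul hs).const_mul C))
  refine h.congr_fderiv ?_
  apply ContinuousLinearMap.ext
  intro v
  simp [smul_eq_mul]
  ring

lemma lin_hasFDerivAt (a b : ℝ) (p : ℝ × ℝ) :
    HasFDerivAt (fun q : ℝ × ℝ => a * q.1 + b * q.2)
      (a • ContinuousLinearMap.fst ℝ ℝ ℝ + b • ContinuousLinearMap.snd ℝ ℝ ℝ) p := by
  have hf : HasFDerivAt (Prod.fst : ℝ × ℝ → ℝ) (ContinuousLinearMap.fst ℝ ℝ ℝ) p :=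
    hasFDerivAt_fst
  have hs : HasFDerivAt (Prod.snd : ℝ × ℝ → ℝ) (ContinuousLinearMap.snd ℝ ℝ ℝ) p :=
    hasFDerivAt_snd
  exact (hf.const_mul a).add (hs.const_mul b)

/-- with h₂ and g(x) as given, (L⁽⁰⁾)⁺h₂ + g(x) = (z̃ + (1−2x)ỹ)z̃.
Coordinates p = (ỹ, z̃); θ = (β−ζ)/μ > 0. -/
theorem stmt_16 (β ζ μ θ x : ℝ)
    (hβ : 0 < β) (hζ : 0 < ζ) (hμ : 0 < μ)
    (hθdef : θ = (β - ζ) / μ) (hθ : 0 < θ)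
    (h₂ : ℝ × ℝ → ℝ)
    (hh₂ : ∀ p : ℝ × ℝ,
      h₂ p = ((1 - 2 * x) * p.1) ^ 2 * (ζ * (1 + 1 / θ)) /
          (2 * (2 * μ + ζ * (1 + 1 / θ)) * (μ + ζ * (1 + 1 / θ)))
        - (1 - 2 * x) * p.1 * p.2 * μ /
          ((2 * μ + ζ * (1 + 1 / θ)) * (μ + ζ * (1 + 1 / θ)))
        - p.2 ^ 2 / (2 * (μ + ζ * (1 + 1 / θ)))) :
    ∀ p : ℝ × ℝ,
      -(μ * p.1) * fderiv ℝ h₂ p (1, 0)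
      - (μ * p.2 + ζ * (1 + 1 / θ) * (p.2 + p.1 * (1 - 2 * x))) * fderiv ℝ h₂ p (0, 1)
      + β * fderiv ℝ (fun q => fderiv ℝ h₂ q (1, 0)) p (1, 0)
      - 2 * β * (1 - 2 * x) * fderiv ℝ (fun q => fderiv ℝ h₂ q (1, 0)) p (0, 1)
      + (β + 4 * ζ * θ * (1 + θ) * x * (1 - x)) * fderiv ℝ (fun q => fderiv ℝ h₂ q (0, 1)) p (0, 1)
      + 4 * x * (1 - x) * (β + ζ * θ * (1 + θ)) / (μ + ζ * (1 + 1 / θ))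
      = (p.2 + (1 - 2 * x) * p.1) * p.2 := by
  intro p
  have hθ' : θ ≠ 0 := ne_of_gt hθ
  have hu : 0 < ζ * (1 + 1 / θ) := by positivity
  have hD1 : (0:ℝ) < μ + ζ * (1 + 1 / θ) := by positivity
  have hD2 : (0:ℝ) < 2 * μ + ζ * (1 + 1 / θ) := by positivity
  set A : ℝ := (1 - 2 * x) ^ 2 * (ζ * (1 + 1 / θ)) /
      (2 * (2 * μ + ζ * (1 + 1 / θ)) * (μ + ζ * (1 + 1 / θ))) with hA
  set B : ℝ := -((1 - 2 * x) * μ /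
      ((2 * μ + ζ * (1 + 1 / θ)) * (μ + ζ * (1 + 1 / θ)))) with hB
  set C : ℝ := -(1 / (2 * (μ + ζ * (1 + 1 / θ)))) with hC
  have hfun : h₂ = fun q : ℝ × ℝ => A * (q.1 * q.1) + B * (q.1 * q.2) + C * (q.2 * q.2) := by
    funext q
    rw [hh₂, hA, hB, hC]
    ring
  have hd : ∀ q : ℝ × ℝ, fderiv ℝ h₂ q =
      (2 * A * q.1 + B * q.2) • ContinuousLinearMap.fst ℝ ℝ ℝ
        + (B * q.1 + 2 * C * q.2) • ContinuousLinearMap.snd ℝ ℝ ℝ := by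
    intro q
    rw [hfun]
    exact (quad_hasFDerivAt A B C q).fderiv
  have h1 : (fun q : ℝ × ℝ => fderiv ℝ h₂ q (1, 0)) =
      fun q : ℝ × ℝ => (2 * A) * q.1 + B * q.2 := by
    funext q; rw [hd q]; simp [smul_eq_mul]
  have h2 : (fun q : ℝ × ℝ => fderiv ℝ h₂ q (0, 1)) =
      fun q : ℝ × ℝ => B * q.1 + (2 * C) * q.2 := by
    funext q; rw [hd q]; simp [smul_eq_mul]
  have hd1 : fderiv ℝ (fun q : ℝ × ℝ => fderiv ℝ h₂ q (1, 0)) p =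
      (2 * A) • ContinuousLinearMap.fst ℝ ℝ ℝ + B • ContinuousLinearMap.snd ℝ ℝ ℝ := by
    rw [h1]; exact (lin_hasFDerivAt (2 * A) B p).fderiv
  have hd2 : fderiv ℝ (fun q : ℝ × ℝ => fderiv ℝ h₂ q (0, 1)) p =
      B • ContinuousLinearMap.fst ℝ ℝ ℝ + (2 * C) • ContinuousLinearMap.snd ℝ ℝ ℝ := by
    rw [h2]; exact (lin_hasFDerivAt B (2 * C) p).fderiv
  rw [hd p, hd1, hd2]
  simp only [ContinuousLinearMap.add_apply, ContinuousLinearMap.coe_smul',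
    Pi.smul_apply, ContinuousLinearMap.coe_fst', ContinuousLinearMap.coe_snd',
    smul_eq_mul, mul_one, mul_zero, add_zero, zero_add]
  have hβeq : β = μ * θ + ζ := by
    field_simp at hθdef
    linarith
  rw [hA, hB, hC, hβeq]
  have hD1' : μ + ζ * (1 + 1 / θ) ≠ 0 := ne_of_gt hD1
  have hD2' : 2 * μ + ζ * (1 + 1 / θ) ≠ 0 := ne_of_gt hD2
  field_simp
  ring
end
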